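/- For every ρ > 0 and every z ∈ ℝ, the generating function U(ρ,z) = A·log(ρ²) + Σ_{i=1}^r a_i·(2·d_i − (z − z_i)·log((d_i + z − z_i)/(d_i − z + z_i))) has second partial derivatives ∂²U/∂ρ² = −(2/ρ²)·(A + Σ a_i·d_i) + 2·Σ a_i/d_i, ∂²U/∂ρ∂z = (2/ρ)·Σ a_i·(z − z_i)/d_i, and ∂²U/∂z² = −2·Σ a_i/d_i; consequently U is an axisymmetric harmonic function: ∂²U/∂z² + ∂²U/∂ρ² + (1/ρ)·∂U/∂ρ = 0 on the half-plane ρ > 0. -/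

import Mathlib

open Finset

/-- The distance `d_i(ρ,z) = (ρ² + (z − z_i)²)^{1/2}`. -/
noncomputable def dd {r : ℕ} (zs : Fin r → ℝ) (ρ z : ℝ) (i : Fin r) : ℝ :=
  Real.sqrt (ρ ^ 2 + (z - zs i) ^ 2)

/-- The generating function `U(ρ,z)`. -/
noncomputable def genU {r : ℕ} (A : ℝ) (a zs : Fin r → ℝ) (ρ z : ℝ) : ℝ :=
  A * Real.log (ρ ^ 2) +
    ∑ i, a i * (2 * dd zs ρ z i -
      (z - zs i) * Real.log ((dd zs ρ z i + z - zs i) / (dd zs ρ z i - z + zs i)))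

section aux

lemma dd_sq {r : ℕ} (zs : Fin r → ℝ) (ρ z : ℝ) (i : Fin r) :
    (dd zs ρ z i) ^ 2 = ρ ^ 2 + (z - zs i) ^ 2 :=
  Real.sq_sqrt (by positivity)

lemma dd_pos {r : ℕ} (zs : Fin r → ℝ) {ρ : ℝ} (z : ℝ) (i : Fin r) (hρ : ρ ≠ 0) :
    0 < dd zs ρ z i :=
  Real.sqrt_pos.mpr (by positivity)

lemma dd_add_pos {r : ℕ} (zs : Fin r → ℝ) {ρ : ℝ} (z : ℝ) (i : Fin r) (hρ : ρ ≠ 0) :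
    0 < dd zs ρ z i + z - zs i := by
  have h1 := dd_pos zs z i hρ
  have h2 := dd_sq zs ρ z i
  have h3 : 0 < ρ ^ 2 := by positivity
  nlinarith [sq_nonneg (dd zs ρ z i + (z - zs i))]

lemma dd_sub_pos {r : ℕ} (zs : Fin r → ℝ) {ρ : ℝ} (z : ℝ) (i : Fin r) (hρ : ρ ≠ 0) :
    0 < dd zs ρ z i - z + zs i := by
  have h1 := dd_pos zs z i hρ
  have h2 := dd_sq zs ρ z i
  have h3 : 0 < ρ ^ 2 := by positivity
  nlinarith [sq_nonneg (dd zs ρ z i - (z - zs i))]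

/-- genU with the log of a quotient split into a difference of logs. -/
lemma genU_eq {r : ℕ} (A : ℝ) (a zs : Fin r → ℝ) {ρ : ℝ} (z : ℝ) (hρ : ρ ≠ 0) :
    genU A a zs ρ z = A * Real.log (ρ ^ 2) +
      ∑ i, a i * (2 * dd zs ρ z i -
        (z - zs i) * (Real.log (dd zs ρ z i + z - zs i) -
          Real.log (dd zs ρ z i - z + zs i))) := by
  unfold genU
  congr 1
  refine Finset.sum_congr rfl fun i _ => ?_
  rw [Real.log_div (dd_add_pos zs z i hρ).ne' (dd_sub_pos zs z i hρ).ne']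

/-- derivative of `s ↦ √(s² + w²)` at `ρ ≠ 0`. -/
lemma sqrt_deriv_rho (w : ℝ) {ρ : ℝ} (hρ : ρ ≠ 0) :
    HasDerivAt (fun s : ℝ => Real.sqrt (s ^ 2 + w ^ 2))
      (ρ / Real.sqrt (ρ ^ 2 + w ^ 2)) ρ := by
  have h1 : HasDerivAt (fun s : ℝ => s ^ 2 + w ^ 2) (2 * ρ) ρ := by
    simpa using (hasDerivAt_pow 2 ρ).add_const (w ^ 2)
  have hx : (0:ℝ) < ρ ^ 2 + w ^ 2 := by positivity
  have h2 := h1.sqrt hx.ne'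
  have hs : (0:ℝ) < Real.sqrt (ρ ^ 2 + w ^ 2) := Real.sqrt_pos.mpr hx
  convert h2 using 1
  field_simp

/-- derivative of `t ↦ √(ρ² + (t-c)²)` at `z` for `ρ ≠ 0`. -/
lemma sqrt_deriv_z (c : ℝ) {ρ : ℝ} (z : ℝ) (hρ : ρ ≠ 0) :
    HasDerivAt (fun t : ℝ => Real.sqrt (ρ ^ 2 + (t - c) ^ 2))
      ((z - c) / Real.sqrt (ρ ^ 2 + (z - c) ^ 2)) z := by
  have h1 : HasDerivAt (fun t : ℝ => ρ ^ 2 + (t - c) ^ 2) (2 * (z - c)) z := by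
    have := (((hasDerivAt_id z).sub_const c).pow 2).const_add (ρ ^ 2)
    simpa using this
  have hx : (0:ℝ) < ρ ^ 2 + (z - c) ^ 2 := by positivity
  have h2 := h1.sqrt hx.ne'
  have hs : (0:ℝ) < Real.sqrt (ρ ^ 2 + (z - c) ^ 2) := Real.sqrt_pos.mpr hx
  convert h2 using 1
  field_simp

/-- First derivative in ρ. -/
lemma genU_deriv_rho {r : ℕ} (A : ℝ) (a zs : Fin r → ℝ) {ρ : ℝ} (z : ℝ) (hρ : ρ ≠ 0) :
    HasDerivAt (fun s => genU A a zs s z)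
      ((2 / ρ) * (A + ∑ i, a i * dd zs ρ z i)) ρ := by
  have hF : HasDerivAt (fun s : ℝ => A * Real.log (s ^ 2) +
      ∑ i, a i * (2 * Real.sqrt (s ^ 2 + (z - zs i) ^ 2) -
        (z - zs i) * (Real.log (Real.sqrt (s ^ 2 + (z - zs i) ^ 2) + (z - zs i)) -
          Real.log (Real.sqrt (s ^ 2 + (z - zs i) ^ 2) - (z - zs i)))))
      (A * (2 * ρ ^ 1 / ρ ^ 2) + ∑ i, a i * (2 * dd zs ρ z i / ρ)) ρ := by
    refine HasDerivAt.add ?_ ?_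
    · exact ((hasDerivAt_pow 2 ρ).log (pow_ne_zero 2 hρ)).const_mul A
    · refine HasDerivAt.fun_sum fun i _ => ?_
      set w := z - zs i with hw
      have hd := dd_pos zs z i hρ
      have hdw1 : 0 < dd zs ρ z i + w := by
        have := dd_add_pos zs z i hρ; linarith [this]
      have hdw2 : 0 < dd zs ρ z i - w := by
        have := dd_sub_pos zs z i hρ; linarith [this]
      have hd2 := dd_sq zs ρ z i
      have hsq := sqrt_deriv_rho w hρ
      have hsq' : HasDerivAt (fun s : ℝ => Real.sqrt (s ^ 2 + w ^ 2))
          (ρ / dd zs ρ z i) ρ := by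
        simpa [dd] using hsq
      have hL1 : HasDerivAt (fun s : ℝ => Real.log (Real.sqrt (s ^ 2 + w ^ 2) + w))
          ((ρ / dd zs ρ z i) / (dd zs ρ z i + w)) ρ := by
        have := (hsq'.add_const w).log (by
          show Real.sqrt (ρ ^ 2 + w ^ 2) + w ≠ 0
          have : dd zs ρ z i = Real.sqrt (ρ ^ 2 + w ^ 2) := rfl
          rw [← this]; exact hdw1.ne')
        simpa [dd] using this
      have hL2 : HasDerivAt (fun s : ℝ => Real.log (Real.sqrt (s ^ 2 + w ^ 2) - w))
          ((ρ / dd zs ρ z i) / (dd zs ρ z i - w)) ρ := by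
        have := (hsq'.sub_const w).log (by
          show Real.sqrt (ρ ^ 2 + w ^ 2) - w ≠ 0
          have : dd zs ρ z i = Real.sqrt (ρ ^ 2 + w ^ 2) := rfl
          rw [← this]; exact hdw2.ne')
        simpa [dd] using this
      have hterm := ((hsq'.const_mul 2).sub ((hL1.sub hL2).const_mul w)).const_mul (a i)
      refine hterm.congr_deriv (Eq.symm ?_)
      have hkey : dd zs ρ z i ^ 2 = ρ ^ 2 + w ^ 2 := hd2
      field_simp
      linear_combination (2 * a i * dd zs ρ z i ^ 2) * hd2
  have hev : (fun s => genU A a zs s z) =ᶠ[nhds ρ] (fun s : ℝ => A * Real.log (s ^ 2) +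
      ∑ i, a i * (2 * Real.sqrt (s ^ 2 + (z - zs i) ^ 2) -
        (z - zs i) * (Real.log (Real.sqrt (s ^ 2 + (z - zs i) ^ 2) + (z - zs i)) -
          Real.log (Real.sqrt (s ^ 2 + (z - zs i) ^ 2) - (z - zs i))))) := by
    filter_upwards [eventually_ne_nhds hρ] with s hs
    rw [genU_eq A a zs z hs]
    congr 1
    refine Finset.sum_congr rfl fun i _ => ?_
    have e1 : dd zs s z i = Real.sqrt (s ^ 2 + (z - zs i) ^ 2) := rfl
    rw [e1]
    ring_nf
  have := hF.congr_of_eventuallyEq hev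
  refine this.congr_deriv (Eq.symm ?_)
  rw [mul_add, Finset.mul_sum]
  congr 1
  · field_simp
  · refine Finset.sum_congr rfl fun i _ => ?_
    field_simp

/-- First derivative in z. -/
lemma genU_deriv_z {r : ℕ} (A : ℝ) (a zs : Fin r → ℝ) {ρ : ℝ} (z : ℝ) (hρ : ρ ≠ 0) :
    HasDerivAt (fun t => genU A a zs ρ t)
      (∑ i, -(a i * (Real.log (dd zs ρ z i + z - zs i) -
        Real.log (dd zs ρ z i - z + zs i)))) z := by
  have hfun : (fun t => genU A a zs ρ t) = fun t => A * Real.log (ρ ^ 2) +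
      ∑ i, a i * (2 * Real.sqrt (ρ ^ 2 + (t - zs i) ^ 2) -
        (t - zs i) * (Real.log (Real.sqrt (ρ ^ 2 + (t - zs i) ^ 2) + t - zs i) -
          Real.log (Real.sqrt (ρ ^ 2 + (t - zs i) ^ 2) - t + zs i))) := by
    funext t
    rw [genU_eq A a zs t hρ]
    rfl
  rw [hfun]
  refine HasDerivAt.const_add _ (HasDerivAt.fun_sum fun i _ => ?_)
  have hid : HasDerivAt (fun t : ℝ => t) 1 z := hasDerivAt_id z
  have hd := dd_pos zs z i hρ
  have hdw1 := dd_add_pos zs z i hρ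
  have hdw2 := dd_sub_pos zs z i hρ
  have hsq : HasDerivAt (fun t : ℝ => Real.sqrt (ρ ^ 2 + (t - zs i) ^ 2))
      ((z - zs i) / dd zs ρ z i) z := by
    simpa [dd] using sqrt_deriv_z (zs i) z hρ
  have hL1 : HasDerivAt
      (fun t : ℝ => Real.log (Real.sqrt (ρ ^ 2 + (t - zs i) ^ 2) + t - zs i))
      (((z - zs i) / dd zs ρ z i + 1) / (dd zs ρ z i + z - zs i)) z := by
    have := ((hsq.add hid).sub_const (zs i)).log (by
      show Real.sqrt (ρ ^ 2 + (z - zs i) ^ 2) + z - zs i ≠ 0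
      exact hdw1.ne')
    simpa [dd] using this
  have hL2 : HasDerivAt
      (fun t : ℝ => Real.log (Real.sqrt (ρ ^ 2 + (t - zs i) ^ 2) - t + zs i))
      (((z - zs i) / dd zs ρ z i - 1) / (dd zs ρ z i - z + zs i)) z := by
    have := ((hsq.sub hid).add_const (zs i)).log (by
      show Real.sqrt (ρ ^ 2 + (z - zs i) ^ 2) - z + zs i ≠ 0
      exact hdw2.ne')
    simpa [dd] using this
  have hw : HasDerivAt (fun t : ℝ => t - zs i) 1 z := hid.sub_const (zs i)
  have hterm := ((hsq.const_mul 2).sub (hw.mul (hL1.sub hL2))).const_mul (a i)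
  refine hterm.congr_deriv (Eq.symm ?_)
  have hsum : (dd zs ρ z i + z - zs i) = dd zs ρ z i + (z - zs i) := by ring
  have hsub : (dd zs ρ z i - z + zs i) = dd zs ρ z i - (z - zs i) := by ring
  have h1 : dd zs ρ z i + (z - zs i) ≠ 0 := by rw [← hsum]; exact hdw1.ne'
  have h2 : dd zs ρ z i - (z - zs i) ≠ 0 := by rw [← hsub]; exact hdw2.ne'
  rw [hsum, hsub]
  simp only [Pi.sub_apply]; rw [show Real.sqrt (ρ ^ 2 + (z - zs i) ^ 2) = dd zs ρ z i from rfl, hsum, hsub]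
  field_simp
  ring

end aux

theorem statement1 {r : ℕ} (hr : 1 ≤ r) (A : ℝ) (hA : 0 < A)
    (zs a : Fin r → ℝ)
    (hz : ∀ i j : Fin r, i < j → zs i < zs j)
    (ha : ∀ i, 0 < a i) (hsum : ∑ i, a i = 1)
    (ρ z : ℝ) (hρ : 0 < ρ) :
    -- second partial derivative in ρ
    HasDerivAt (fun t => deriv (fun s => genU A a zs s z) t)
      (-(2 / ρ ^ 2) * (A + ∑ i, a i * dd zs ρ z i) + 2 * ∑ i, a i / dd zs ρ z i) ρ ∧
    -- mixed partial derivative: ∂/∂z of ∂U/∂ρ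
    HasDerivAt (fun t => deriv (fun s => genU A a zs s t) ρ)
      ((2 / ρ) * ∑ i, a i * (z - zs i) / dd zs ρ z i) z ∧
    -- second partial derivative in z
    HasDerivAt (fun t => deriv (fun s => genU A a zs ρ s) t)
      (-2 * ∑ i, a i / dd zs ρ z i) z ∧
    -- harmonicity: U_zz + U_ρρ + (1/ρ) U_ρ = 0
    deriv (fun t => deriv (fun s => genU A a zs ρ s) t) z +
      deriv (fun t => deriv (fun s => genU A a zs s z) t) ρ +
      (1 / ρ) * deriv (fun s => genU A a zs s z) ρ = 0 := by
  have hρ' : ρ ≠ 0 := hρ.ne'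
  -- ∂²/∂ρ²
  have part1 : HasDerivAt (fun t => deriv (fun s => genU A a zs s z) t)
      (-(2 / ρ ^ 2) * (A + ∑ i, a i * dd zs ρ z i) + 2 * ∑ i, a i / dd zs ρ z i) ρ := by
    have hev : (fun t => deriv (fun s => genU A a zs s z) t) =ᶠ[nhds ρ]
        (fun t => (2 / t) * (A + ∑ i, a i * dd zs t z i)) := by
      filter_upwards [eventually_ne_nhds hρ'] with t ht
      exact (genU_deriv_rho A a zs z ht).deriv
    have h1 : HasDerivAt (fun t : ℝ => 2 / t) ((0 * ρ - 2 * 1) / ρ ^ 2) ρ :=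
      (hasDerivAt_const ρ 2).div (hasDerivAt_id ρ) hρ'
    have h2 : HasDerivAt (fun t => A + ∑ i, a i * dd zs t z i)
        (∑ i, a i * (ρ / dd zs ρ z i)) ρ := by
      refine HasDerivAt.const_add A (HasDerivAt.fun_sum fun i _ => ?_)
      simpa [dd] using (sqrt_deriv_rho (z - zs i) hρ').const_mul (a i)
    have hG := h1.mul h2
    have := hG.congr_of_eventuallyEq hev
    refine this.congr_deriv (Eq.symm ?_)
    have e1 : (2 / ρ) * ∑ i, a i * (ρ / dd zs ρ z i) = 2 * ∑ i, a i / dd zs ρ z i := by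
      rw [Finset.mul_sum, Finset.mul_sum]
      refine Finset.sum_congr rfl fun i _ => ?_
      have hd := (dd_pos zs z i hρ').ne'
      field_simp
    rw [← e1]
    ring
  -- mixed
  have part2 : HasDerivAt (fun t => deriv (fun s => genU A a zs s t) ρ)
      ((2 / ρ) * ∑ i, a i * (z - zs i) / dd zs ρ z i) z := by
    have hfun : (fun t => deriv (fun s => genU A a zs s t) ρ) =
        fun t => (2 / ρ) * (A + ∑ i, a i * dd zs ρ t i) := by
      funext t
      exact (genU_deriv_rho A a zs t hρ').deriv
    rw [hfun]
    have h2 : HasDerivAt (fun t => A + ∑ i, a i * dd zs ρ t i)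
        (∑ i, a i * ((z - zs i) / dd zs ρ z i)) z := by
      refine HasDerivAt.const_add A (HasDerivAt.fun_sum fun i _ => ?_)
      simpa [dd] using (sqrt_deriv_z (zs i) z hρ').const_mul (a i)
    have := h2.const_mul (2 / ρ)
    refine this.congr_deriv (Eq.symm ?_); congr 1
    refine Finset.sum_congr rfl fun i _ => ?_
    ring
  -- ∂²/∂z²
  have part3 : HasDerivAt (fun t => deriv (fun s => genU A a zs ρ s) t)
      (-2 * ∑ i, a i / dd zs ρ z i) z := by
    have hfun : (fun t => deriv (fun s => genU A a zs ρ s) t) =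
        fun t => ∑ i, -(a i * (Real.log (dd zs ρ t i + t - zs i) -
          Real.log (dd zs ρ t i - t + zs i))) := by
      funext t
      exact (genU_deriv_z A a zs t hρ').deriv
    rw [hfun]
    have hsum : HasDerivAt (fun t => ∑ i, -(a i * (Real.log (dd zs ρ t i + t - zs i) -
        Real.log (dd zs ρ t i - t + zs i))))
        (∑ i, -(a i * (2 / dd zs ρ z i))) z := by
      refine HasDerivAt.fun_sum fun i _ => ?_
      have hid : HasDerivAt (fun t : ℝ => t) 1 z := hasDerivAt_id z
      have hd := dd_pos zs z i hρ'
      have hdw1 := dd_add_pos zs z i hρ'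
      have hdw2 := dd_sub_pos zs z i hρ'
      have hsq : HasDerivAt (fun t : ℝ => Real.sqrt (ρ ^ 2 + (t - zs i) ^ 2))
          ((z - zs i) / dd zs ρ z i) z := by
        simpa [dd] using sqrt_deriv_z (zs i) z hρ'
      have hL1 : HasDerivAt
          (fun t : ℝ => Real.log (Real.sqrt (ρ ^ 2 + (t - zs i) ^ 2) + t - zs i))
          (((z - zs i) / dd zs ρ z i + 1) / (dd zs ρ z i + z - zs i)) z := by
        have := ((hsq.add hid).sub_const (zs i)).log (by
          show Real.sqrt (ρ ^ 2 + (z - zs i) ^ 2) + z - zs i ≠ 0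
          exact hdw1.ne')
        simpa [dd] using this
      have hL2 : HasDerivAt
          (fun t : ℝ => Real.log (Real.sqrt (ρ ^ 2 + (t - zs i) ^ 2) - t + zs i))
          (((z - zs i) / dd zs ρ z i - 1) / (dd zs ρ z i - z + zs i)) z := by
        have := ((hsq.sub hid).add_const (zs i)).log (by
          show Real.sqrt (ρ ^ 2 + (z - zs i) ^ 2) - z + zs i ≠ 0
          exact hdw2.ne')
        simpa [dd] using this
      have hterm := (((hL1.sub hL2).const_mul (a i)).neg : HasDerivAt
        (fun t => -(a i * (Real.log (Real.sqrt (ρ ^ 2 + (t - zs i) ^ 2) + t - zs i) -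
          Real.log (Real.sqrt (ρ ^ 2 + (t - zs i) ^ 2) - t + zs i)))) _ z)
      have hfun2 : (fun t => -(a i * (Real.log (dd zs ρ t i + t - zs i) -
          Real.log (dd zs ρ t i - t + zs i)))) =
          (fun t => -(a i * (Real.log (Real.sqrt (ρ ^ 2 + (t - zs i) ^ 2) + t - zs i) -
            Real.log (Real.sqrt (ρ ^ 2 + (t - zs i) ^ 2) - t + zs i)))) := by
        funext t; rfl
      rw [hfun2]
      refine hterm.congr_deriv (Eq.symm ?_)
      have hsum' : (dd zs ρ z i + z - zs i) = dd zs ρ z i + (z - zs i) := by ring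
      have hsub' : (dd zs ρ z i - z + zs i) = dd zs ρ z i - (z - zs i) := by ring
      have h1 : dd zs ρ z i + (z - zs i) ≠ 0 := by rw [← hsum']; exact hdw1.ne'
      have h2 : dd zs ρ z i - (z - zs i) ≠ 0 := by rw [← hsub']; exact hdw2.ne'
      rw [hsum', hsub']
      field_simp
      ring
    convert hsum using 1
    rw [Finset.mul_sum]
    refine Finset.sum_congr rfl fun i _ => ?_
    ring
  refine ⟨part1, part2, part3, ?_⟩
  rw [part3.deriv, part1.deriv, (genU_deriv_rho A a zs z hρ').deriv]
  field_simp
  ring
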